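/- Let s ∈ (0,1]. (a) For every ξ ∈ S³: the point (0,ξ) lies in ⋄_{0,s} if and only if ξ⁴ ≤ (1−(s/6)²)/(1+(s/6)²). (b) For every τ ∈ [0,π) and ξ ∈ S³ with cos τ > ξ⁴: if (τ,ξ) ∈ ⋄_{τ,4s} — that is, if ℏ(τ,ξ) ≤ 0 or 𝔰(τ,ξ) ≥ (4s)/6 — then (0,ξ) ∈ ⋄_{0,s}. -/
import Mathlib


/-- The unit three-sphere in `ℝ⁴` (as the set of `ξ : Fin 4 → ℝ` of unit length,
indexed so that `ξ 3 = ξ⁴`). -/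
def sphere3 : Set (Fin 4 → ℝ) := {ξ | (ξ 0) ^ 2 + (ξ 1) ^ 2 + (ξ 2) ^ 2 + (ξ 3) ^ 2 = 1}

/-- `h(τ,ξ) = cos τ - ξ⁴`. -/
noncomputable def hfun (p : ℝ × (Fin 4 → ℝ)) : ℝ := Real.cos p.1 - p.2 3

/-- `ℏ(τ,ξ) = cos τ + ξ⁴`. -/
noncomputable def hbarfun (p : ℝ × (Fin 4 → ℝ)) : ℝ := Real.cos p.1 + p.2 3

/-- `𝔰(τ,ξ) = (2 sin τ + √(1 - (ξ⁴)²)) / ℏ(τ,ξ)`. -/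
noncomputable def sfun (p : ℝ × (Fin 4 → ℝ)) : ℝ :=
  (2 * Real.sin p.1 + Real.sqrt (1 - (p.2 3) ^ 2)) / hbarfun p

/-- The future half of the Minkowski diamond,
`⋄₊ = {(τ,ξ) ∈ [0,π) × S³ : h(τ,ξ) > 0}`. -/
def diamondPlus : Set (ℝ × (Fin 4 → ℝ)) :=
  {p | p.2 ∈ sphere3 ∧ 0 ≤ p.1 ∧ p.1 < Real.pi ∧ 0 < hfun p}

/-- `Δ_{<r} = {(τ,ξ) ∈ ⋄₊ : ℏ(τ,ξ) > 0 and 𝔰(τ,ξ) < r}`. -/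
noncomputable def deltaLT (r : ℝ) : Set (ℝ × (Fin 4 → ℝ)) :=
  {p ∈ diamondPlus | 0 < hbarfun p ∧ sfun p < r}

/-- `⋄ₛ = ⋄₊ \ Δ_{<s/6}`. -/
noncomputable def diamondS (s : ℝ) : Set (ℝ × (Fin 4 → ℝ)) := diamondPlus \ deltaLT (s / 6)

/-- `⋄_{τ,s} = ({τ} × S³) ∩ ⋄ₛ`. -/
noncomputable def diamondTauS (τ s : ℝ) : Set (ℝ × (Fin 4 → ℝ)) :=
  ({τ} ×ˢ (Set.univ : Set (Fin 4 → ℝ))) ∩ diamondS s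

set_option maxHeartbeats 1000000

/-- the equivalence `(eq:D0xi4)` and the implication `(eq:D4s,s)` from the
proof of Lemma 6.6: (a) `(0,ξ) ∈ ⋄_{0,s}` iff `ξ⁴ ≤ (1-(s/6)²)/(1+(s/6)²)`, and
(b) for `τ ∈ [0,π)` and `ξ ∈ S³` with `cos τ > ξ⁴`, if `(τ,ξ) ∈ ⋄_{τ,4s}`, that is, if
`ℏ(τ,ξ) ≤ 0` or `𝔰(τ,ξ) ≥ (4s)/6`, then `(0,ξ) ∈ ⋄_{0,s}`. -/
theorem stmt6 (s : ℝ) (hs : s ∈ Set.Ioc (0 : ℝ) 1) :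
    (∀ ξ ∈ sphere3,
      ((0 : ℝ), ξ) ∈ diamondTauS 0 s ↔ ξ 3 ≤ (1 - (s / 6) ^ 2) / (1 + (s / 6) ^ 2)) ∧
    (∀ τ : ℝ, ∀ ξ : Fin 4 → ℝ, 0 ≤ τ → τ < Real.pi → ξ ∈ sphere3 → ξ 3 < Real.cos τ →
      (hbarfun (τ, ξ) ≤ 0 ∨ 4 * s / 6 ≤ sfun (τ, ξ)) →
      ((0 : ℝ), ξ) ∈ diamondTauS 0 s) := by
  obtain ⟨hs0, hs1⟩ := hs
  set σ := s / 6 with hσdef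
  have hσ0 : 0 < σ := by positivity
  have hσ6 : σ ≤ 1/6 := by rw [hσdef]; linarith
  have hden : (0:ℝ) < 1 + σ^2 := by positivity
  have key : ∀ ξ ∈ sphere3,
      (((0:ℝ), ξ) ∈ diamondTauS 0 s ↔ ξ 3 ≤ (1 - σ^2)/(1+σ^2)) := by
    intro ξ hξ
    have hx2 : (ξ 3)^2 ≤ 1 := by
      have h1 := hξ
      simp only [sphere3, Set.mem_setOf_eq] at h1
      nlinarith [sq_nonneg (ξ 0), sq_nonneg (ξ 1), sq_nonneg (ξ 2)]
    have hx1 : ξ 3 ≤ 1 := by nlinarith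
    have hxm1 : -1 ≤ ξ 3 := by nlinarith
    set x := ξ 3 with hxdef
    set r := Real.sqrt (1 - x^2) with hrdef
    have hr0 : 0 ≤ r := Real.sqrt_nonneg _
    have hr2 : r^2 = 1 - x^2 := Real.sq_sqrt (by nlinarith)
    have mem_iff : (((0:ℝ), ξ) ∈ diamondTauS 0 s ↔
        (x < 1 ∧ ¬(0 < 1 + x ∧ r / (1 + x) < σ))) := by
      simp only [diamondTauS, diamondS, deltaLT, diamondPlus, hfun, hbarfun, sfun,
        Set.mem_inter_iff, Set.mem_prod, Set.mem_singleton_iff, Set.mem_univ,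
        Set.mem_diff, Set.mem_sep_iff, Set.mem_setOf_eq, Real.cos_zero, Real.sin_zero]
      constructor
      · rintro ⟨-, ⟨-, -, -, h4⟩, h5⟩
        refine ⟨by linarith, fun hc => h5 ⟨⟨hξ, le_refl 0, Real.pi_pos, by linarith⟩, ?_, ?_⟩⟩
        · simpa using hc.1
        · simpa [← hσdef] using hc.2
      · rintro ⟨h1, h2⟩
        refine ⟨⟨by trivial, by trivial⟩, ⟨hξ, le_refl 0, Real.pi_pos, by linarith⟩, ?_⟩
        rintro ⟨-, hb, hsf⟩
        exact h2 ⟨by linarith [hb], by simpa [← hσdef] using hsf⟩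
    rw [mem_iff]
    constructor
    · rintro ⟨hlt, hnot⟩
      by_contra hgt
      push_neg at hgt
      rw [div_lt_iff₀ hden] at hgt
      have hxpos : 0 < x := by nlinarith
      apply hnot
      refine ⟨by linarith, ?_⟩
      rw [div_lt_iff₀ (by linarith : (0:ℝ) < 1 + x), hrdef,
        Real.sqrt_lt' (by nlinarith : (0:ℝ) < σ * (1 + x))]
      nlinarith [mul_pos (show (0:ℝ) < 1 + x by linarith)
        (show (0:ℝ) < x * (1 + σ^2) - (1 - σ^2) by linarith)]
    · intro hle
      have hxlt : x < 1 := by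
        rw [le_div_iff₀ hden] at hle; nlinarith
      refine ⟨hxlt, ?_⟩
      rintro ⟨hb, hsf⟩
      rw [div_lt_iff₀ hb] at hsf
      rw [le_div_iff₀ hden] at hle
      nlinarith
  refine ⟨key, ?_⟩
  intro τ ξ hτ0 hτπ hξ hxc hdisj
  have h1 := hξ
  simp only [sphere3, Set.mem_setOf_eq] at h1
  have hx2 : (ξ 3)^2 ≤ 1 := by
    nlinarith [sq_nonneg (ξ 0), sq_nonneg (ξ 1), sq_nonneg (ξ 2)]
  set x := ξ 3 with hxdef
  have hxm1 : -1 ≤ x := by nlinarith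
  apply (key ξ hξ).2
  rcases hdisj with hb | hsf
  · -- ℏ ≤ 0 : x < 0
    simp only [hbarfun] at hb
    have hxneg : x < 0 := by linarith
    have : (0:ℝ) ≤ (1 - σ^2)/(1+σ^2) := by
      apply div_nonneg _ (le_of_lt hden); nlinarith
    linarith
  · -- 𝔰 ≥ 4σ
    by_contra hgt
    push_neg at hgt
    rw [div_lt_iff₀ hden] at hgt
    have hx34 : (3:ℝ)/4 ≤ x := by nlinarith
    have hc : x < Real.cos τ := hxc
    have hcpos : 0 < Real.cos τ := by linarith
    have hsin0 : 0 ≤ Real.sin τ := Real.sin_nonneg_of_nonneg_of_le_pi hτ0 (le_of_lt hτπ)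
    have hsin2 : (Real.sin τ)^2 = 1 - (Real.cos τ)^2 := by
      linarith [Real.sin_sq_add_cos_sq τ]
    set r := Real.sqrt (1 - x^2) with hrdef
    have hr0 : 0 ≤ r := Real.sqrt_nonneg _
    have hr2 : r^2 = 1 - x^2 := Real.sq_sqrt (by linarith)
    have htr : Real.sin τ < r := by nlinarith
    have hrσ : r < σ * (1 + x) := by
      rw [hrdef, Real.sqrt_lt' (by nlinarith : (0:ℝ) < σ * (1 + x))]
      nlinarith [mul_pos (show (0:ℝ) < 1 + x by linarith)
        (show (0:ℝ) < x * (1 + σ^2) - (1 - σ^2) by linarith)]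
    have hbpos : 0 < Real.cos τ + x := by linarith
    simp only [sfun, hbarfun] at hsf
    rw [le_div_iff₀ hbpos] at hsf
    have h4σ : 4 * s / 6 = 4 * σ := by rw [hσdef]; ring
    rw [h4σ] at hsf
    -- 4σ(c+x) ≤ 2 sin τ + r < 3r < 3σ(1+x), but c+x > 2x ≥ 3/2
    nlinarith [mul_pos hσ0 hbpos]
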